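/- Let J be an invertible matrix, M⁻¹ = M₂⁻¹ (I − J M₁⁻¹) + M₁⁻¹ the two-stage preconditioner, and suppose ‖I − M₁⁻¹ J‖ ≤ ρ₁ and ‖I − M₂⁻¹ J‖ ≤ ρ₂ for a submultiplicative matrix norm. Then ‖I − M⁻¹ J‖ ≤ ρ₁ ρ₂; in particular, if ρ₁ ρ₂ < 1 then M⁻¹ J is invertible. -/

import Mathlib

open Matrix

attribute [local instance] Matrix.linftyOpNormedRing

theorem stmt17 {n : Type*} [Fintype n] [DecidableEq n]
    (J M₁inv M₂inv : Matrix n n ℝ) (hJ : IsUnit J)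
    (ρ₁ ρ₂ : ℝ) (hρ₁ : 0 ≤ ρ₁) (hρ₂ : 0 ≤ ρ₂)
    (h₁ : ‖1 - M₁inv * J‖ ≤ ρ₁) (h₂ : ‖1 - M₂inv * J‖ ≤ ρ₂) :
    ‖1 - (M₂inv * (1 - J * M₁inv) + M₁inv) * J‖ ≤ ρ₁ * ρ₂ ∧
    (ρ₁ * ρ₂ < 1 → IsUnit ((M₂inv * (1 - J * M₁inv) + M₁inv) * J)) := by
  have key : 1 - (M₂inv * (1 - J * M₁inv) + M₁inv) * J
      = (1 - M₂inv * J) * (1 - M₁inv * J) := by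
    noncomm_ring
  have hb : ‖1 - (M₂inv * (1 - J * M₁inv) + M₁inv) * J‖ ≤ ρ₁ * ρ₂ := by
    rw [key]
    calc ‖(1 - M₂inv * J) * (1 - M₁inv * J)‖
        ≤ ‖1 - M₂inv * J‖ * ‖1 - M₁inv * J‖ := norm_mul_le _ _
      _ ≤ ρ₂ * ρ₁ := mul_le_mul h₂ h₁ (norm_nonneg _) hρ₂
      _ = ρ₁ * ρ₂ := mul_comm _ _
  refine ⟨hb, fun hlt => ?_⟩
  have : ‖1 - (M₂inv * (1 - J * M₁inv) + M₁inv) * J‖ < 1 := lt_of_le_of_lt hb hlt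
  haveI hcs : CompleteSpace (Matrix n n ℝ) := FiniteDimensional.complete ℝ _
  haveI hgs : HasSummableGeomSeries (Matrix n n ℝ) := @instHasSummableGeomSeriesOfCompleteSpace _ _ hcs
  have h := (Units.oneSub _ this).isUnit
  simpa using h
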